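/- Let λ₁ > ⋯ > λ_K > 0 and a₁ > ⋯ > a_K > 0. For any X ∈ St(d,K) and Q ∈ St(d,K) with Θ² = diag(λ₁,…,λ_K), one has tr(Xᵀ Q Θ² Qᵀ X diag(a)) ≤ Σ_{k=1}^K λ_k a_k, with equality attained at X = Q. -/

import Mathlib

open Matrix

section QpocAux

open Finset

private lemma qpoc_tele_ico (n : ℕ) (f : ℕ → ℝ) :
    ∀ i ≤ n, ∑ j ∈ Finset.Ico i n, (f j - f (j+1)) = f i - f n := by
  induction n with
  | zero => intro i hi; interval_cases i; simp
  | succ n ih =>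
    intro i hi
    rcases eq_or_lt_of_le hi with h | h
    · subst h; simp
    · rw [Finset.sum_Ico_succ_top (by omega), ih i (by omega)]; ring

private lemma qpoc_tele_ind (K : ℕ) (f : ℕ → ℝ) (hK : f K = 0) (i : ℕ) (hi : i < K) :
    f i = ∑ j ∈ Finset.range K, if i ≤ j then (f j - f (j+1)) else 0 := by
  have hfilter : Finset.filter (fun j => i ≤ j) (Finset.range K) = Finset.Ico i K := by
    ext x; simp [Finset.mem_Ico, and_comm]
  rw [← Finset.sum_filter, hfilter, qpoc_tele_ico K f i (le_of_lt hi), hK, sub_zero]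

private lemma qpoc_abel1 (K : ℕ) (lam c : ℕ → ℝ) (hlK : lam K = 0) :
    ∑ i ∈ Finset.range K, lam i * c i
      = ∑ j ∈ Finset.range K, (lam j - lam (j+1)) * ∑ i ∈ Finset.range (j+1), c i := by
  calc ∑ i ∈ Finset.range K, lam i * c i
      = ∑ i ∈ Finset.range K, ∑ j ∈ Finset.range K,
          (if i ≤ j then (lam j - lam (j+1)) * c i else 0) := by
        refine Finset.sum_congr rfl fun i hi => ?_
        rw [qpoc_tele_ind K lam hlK i (Finset.mem_range.1 hi), Finset.sum_mul]
        exact Finset.sum_congr rfl fun j _ => by split_ifs <;> simp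
    _ = ∑ j ∈ Finset.range K, ∑ i ∈ Finset.range K,
          (if i ≤ j then (lam j - lam (j+1)) * c i else 0) := Finset.sum_comm
    _ = ∑ j ∈ Finset.range K, (lam j - lam (j+1)) * ∑ i ∈ Finset.range (j+1), c i := by
        refine Finset.sum_congr rfl fun j hj => ?_
        rw [← Finset.sum_filter, Finset.mul_sum]
        have hfil : Finset.filter (fun i => i ≤ j) (Finset.range K) = Finset.range (j+1) := by
          have := Finset.mem_range.1 hj
          ext x; simp only [Finset.mem_filter, Finset.mem_range]; omega
        rw [hfil]

private lemma qpoc_abel_bound (K : ℕ) (lam a : ℕ → ℝ) (p : ℕ → ℕ → ℝ)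
    (hlK : lam K = 0) (haK : a K = 0)
    (hl : ∀ j < K, lam (j+1) ≤ lam j) (ha2 : ∀ j < K, a (j+1) ≤ a j)
    (hp0 : ∀ i k, 0 ≤ p i k)
    (hrow : ∀ i, ∑ k ∈ Finset.range K, p i k ≤ 1)
    (hcol : ∀ k, ∑ i ∈ Finset.range K, p i k ≤ 1) :
    ∑ i ∈ Finset.range K, ∑ k ∈ Finset.range K, lam i * a k * p i k
      ≤ ∑ k ∈ Finset.range K, lam k * a k := by
  have hDpos : ∀ j < K, 0 ≤ lam j - lam (j+1) := fun j hj => sub_nonneg.2 (hl j hj)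
  have hEpos : ∀ l < K, 0 ≤ a l - a (l+1) := fun l hl' => sub_nonneg.2 (ha2 l hl')
  have lhs_eq : ∑ i ∈ Finset.range K, ∑ k ∈ Finset.range K, lam i * a k * p i k
      = ∑ j ∈ Finset.range K, (lam j - lam (j+1)) *
          ∑ l ∈ Finset.range K, (a l - a (l+1)) *
            ∑ k ∈ Finset.range (l+1), ∑ i ∈ Finset.range (j+1), p i k := by
    have step1 : ∑ i ∈ Finset.range K, ∑ k ∈ Finset.range K, lam i * a k * p i k
        = ∑ i ∈ Finset.range K, lam i * ∑ k ∈ Finset.range K, a k * p i k := by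
      refine Finset.sum_congr rfl fun i _ => ?_
      rw [Finset.mul_sum]; exact Finset.sum_congr rfl fun k _ => by ring
    rw [step1, qpoc_abel1 K lam _ hlK]
    refine Finset.sum_congr rfl fun j hj => ?_
    congr 1
    have swap : ∑ i ∈ Finset.range (j+1), ∑ k ∈ Finset.range K, a k * p i k
        = ∑ k ∈ Finset.range K, a k * ∑ i ∈ Finset.range (j+1), p i k := by
      rw [Finset.sum_comm]
      exact Finset.sum_congr rfl fun k _ => by rw [Finset.mul_sum]
    rw [swap, qpoc_abel1 K a _ haK]
  have rhs_eq : ∑ k ∈ Finset.range K, lam k * a k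
      = ∑ j ∈ Finset.range K, (lam j - lam (j+1)) *
          ∑ l ∈ Finset.range K, (a l - a (l+1)) * ((min j l : ℕ) + 1 : ℝ) := by
    rw [qpoc_abel1 K lam a hlK]
    refine Finset.sum_congr rfl fun j hj => ?_
    congr 1
    have expand : ∑ k ∈ Finset.range (j+1), a k
        = ∑ k ∈ Finset.range K, a k * (if k ≤ j then (1:ℝ) else 0) := by
      have h1 : ∀ k, a k * (if k ≤ j then (1:ℝ) else 0) = if k ≤ j then a k else 0 := by
        intro k; split_ifs <;> simp
      simp_rw [h1]
      rw [← Finset.sum_filter]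
      congr 1
      have := Finset.mem_range.1 hj
      ext x; simp only [Finset.mem_filter, Finset.mem_range]; omega
    rw [expand, qpoc_abel1 K a _ haK]
    refine Finset.sum_congr rfl fun l hl' => ?_
    congr 1
    have hfil : Finset.filter (fun k => k ≤ j) (Finset.range (l+1))
        = Finset.range (min j l + 1) := by
      ext x; simp only [Finset.mem_filter, Finset.mem_range]; omega
    rw [← Finset.sum_filter, hfil, Finset.sum_const, Finset.card_range]
    rw [nsmul_eq_mul, mul_one]; push_cast; ring
  rw [lhs_eq, rhs_eq]
  refine Finset.sum_le_sum fun j hj => ?_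
  refine mul_le_mul_of_nonneg_left ?_ (hDpos j (Finset.mem_range.1 hj))
  refine Finset.sum_le_sum fun l hl' => ?_
  refine mul_le_mul_of_nonneg_left ?_ (hEpos l (Finset.mem_range.1 hl'))
  have hjK := Finset.mem_range.1 hj
  have hlK' := Finset.mem_range.1 hl'
  have hT1 : ∑ k ∈ Finset.range (l+1), ∑ i ∈ Finset.range (j+1), p i k ≤ (l:ℝ) + 1 := by
    calc ∑ k ∈ Finset.range (l+1), ∑ i ∈ Finset.range (j+1), p i k
        ≤ ∑ k ∈ Finset.range (l+1), (1:ℝ) := by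
          refine Finset.sum_le_sum fun k _ => ?_
          calc ∑ i ∈ Finset.range (j+1), p i k
              ≤ ∑ i ∈ Finset.range K, p i k :=
                Finset.sum_le_sum_of_subset_of_nonneg
                  (Finset.range_subset_range.2 (by omega)) (fun i _ _ => hp0 i k)
            _ ≤ 1 := hcol k
      _ = (l:ℝ) + 1 := by rw [Finset.sum_const, Finset.card_range]; push_cast; ring
  have hT2 : ∑ k ∈ Finset.range (l+1), ∑ i ∈ Finset.range (j+1), p i k ≤ (j:ℝ) + 1 := by
    rw [Finset.sum_comm]
    calc ∑ i ∈ Finset.range (j+1), ∑ k ∈ Finset.range (l+1), p i k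
        ≤ ∑ i ∈ Finset.range (j+1), (1:ℝ) := by
          refine Finset.sum_le_sum fun i _ => ?_
          calc ∑ k ∈ Finset.range (l+1), p i k
              ≤ ∑ k ∈ Finset.range K, p i k :=
                Finset.sum_le_sum_of_subset_of_nonneg
                  (Finset.range_subset_range.2 (by omega)) (fun k _ _ => hp0 i k)
            _ ≤ 1 := hrow i
      _ = (j:ℝ) + 1 := by rw [Finset.sum_const, Finset.card_range]; push_cast; ring
  rcases le_total j l with h | h
  · rw [min_eq_left h]; exact hT2
  · rw [min_eq_right h]; exact hT1

private lemma qpoc_proj_diag_le {d K : ℕ} (X Q : Matrix (Fin d) (Fin K) ℝ)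
    (hX : Xᵀ * X = 1) (hQ : Qᵀ * Q = 1) (k : Fin K) :
    ∑ i, ((Qᵀ * X) i k)^2 ≤ 1 := by
  set P : Matrix (Fin d) (Fin d) ℝ := 1 - Q * Qᵀ with hP
  have hPt : Pᵀ = P := by
    simp [hP, Matrix.transpose_sub, Matrix.transpose_mul]
  have hPP : P * P = P := by
    simp only [hP, Matrix.sub_mul, Matrix.mul_sub, Matrix.one_mul, Matrix.mul_one]
    rw [Matrix.mul_assoc, ← Matrix.mul_assoc Qᵀ Q Qᵀ, hQ, Matrix.one_mul]
    abel
  have key : (1 : Matrix (Fin K) (Fin K) ℝ) - (Qᵀ * X)ᵀ * (Qᵀ * X) = (P * X)ᵀ * (P * X) := by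
    rw [Matrix.transpose_mul, Matrix.transpose_mul, hPt, Matrix.transpose_transpose]
    calc (1 : Matrix (Fin K) (Fin K) ℝ) - Xᵀ * Q * (Qᵀ * X)
        = Xᵀ * X - Xᵀ * (Q * Qᵀ) * X := by
          rw [hX]; simp only [Matrix.mul_assoc]
      _ = Xᵀ * (P * X) := by
          rw [hP, Matrix.sub_mul, Matrix.one_mul, Matrix.mul_sub]
          simp only [Matrix.mul_assoc]
      _ = Xᵀ * P * (P * X) := by rw [Matrix.mul_assoc, ← Matrix.mul_assoc P P X, hPP]
  have hdiag : (1 : ℝ) - ∑ i, ((Qᵀ * X) i k)^2 = ∑ j, ((P * X) j k)^2 := by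
    have := congrArg (fun A => A k k) key
    simp only [Matrix.sub_apply, Matrix.one_apply_eq, Matrix.mul_apply,
      Matrix.transpose_apply] at this
    simpa [pow_two, Matrix.mul_apply, Matrix.transpose_apply] using this
  nlinarith [Finset.sum_nonneg (fun j (_ : j ∈ Finset.univ) => sq_nonneg ((P * X) j k))]

end QpocAux

/-- Optimal value of QPOC: `tr(Xᵀ Q Θ² Qᵀ X diag(a)) ≤ Σ_k λ_k a_k` for every
`X ∈ St(d,K)`, with equality attained at `X = Q`. -/
theorem qpoc_optimal_value {d K : ℕ} (hdK : d > K)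
    (lam a : Fin K → ℝ) (hlam : StrictAnti lam) (hlampos : ∀ k, 0 < lam k)
    (ha : StrictAnti a) (hapos : ∀ k, 0 < a k)
    (Q : Matrix (Fin d) (Fin K) ℝ) (hQ : Qᵀ * Q = 1) :
    (∀ X : Matrix (Fin d) (Fin K) ℝ, Xᵀ * X = 1 →
      (Xᵀ * (Q * Matrix.diagonal lam * Qᵀ) * X * Matrix.diagonal a).trace ≤
        ∑ k, lam k * a k) ∧
    (Qᵀ * (Q * Matrix.diagonal lam * Qᵀ) * Q * Matrix.diagonal a).trace =
      ∑ k, lam k * a k := by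
  constructor
  · intro X hX
    set M : Matrix (Fin K) (Fin K) ℝ := Qᵀ * X with hM
    -- rewrite the matrix
    have h1 : Xᵀ * (Q * Matrix.diagonal lam * Qᵀ) * X = Mᵀ * Matrix.diagonal lam * M := by
      rw [hM, Matrix.transpose_mul, Matrix.transpose_transpose]
      simp only [Matrix.mul_assoc]
    -- trace formula
    have htr : (Xᵀ * (Q * Matrix.diagonal lam * Qᵀ) * X * Matrix.diagonal a).trace
        = ∑ i : Fin K, ∑ k : Fin K, lam i * a k * (M i k)^2 := by
      have e1 : ∀ k : Fin K, (Mᵀ * Matrix.diagonal lam * M * Matrix.diagonal a) k k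
          = ∑ j, M j k * lam j * M j k * a k := by
        intro k
        rw [Matrix.mul_diagonal, Matrix.mul_assoc, Matrix.mul_apply, Finset.sum_mul]
        refine Finset.sum_congr rfl fun j _ => ?_
        rw [Matrix.diagonal_mul, Matrix.transpose_apply]; ring
      rw [h1, Matrix.trace]
      calc ∑ k, (Mᵀ * Matrix.diagonal lam * M * Matrix.diagonal a).diag k
          = ∑ k : Fin K, ∑ j : Fin K, M j k * lam j * M j k * a k :=
            Finset.sum_congr rfl fun k _ => e1 k
        _ = ∑ i : Fin K, ∑ k : Fin K, lam i * a k * (M i k)^2 := by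
            rw [Finset.sum_comm]
            exact Finset.sum_congr rfl fun i _ => Finset.sum_congr rfl fun k _ => by ring
    -- extensions to ℕ
    set lam' : ℕ → ℝ := fun n => if h : n < K then lam ⟨n, h⟩ else 0 with hlam'
    set a' : ℕ → ℝ := fun n => if h : n < K then a ⟨n, h⟩ else 0 with ha'
    set p' : ℕ → ℕ → ℝ := fun i k =>
      if h : i < K ∧ k < K then (M ⟨i, h.1⟩ ⟨k, h.2⟩)^2 else 0 with hp'
    have hcolM : ∀ k : Fin K, ∑ i : Fin K, (M i k)^2 ≤ 1 := fun k =>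
      qpoc_proj_diag_le X Q hX hQ k
    have hrowM : ∀ i : Fin K, ∑ k : Fin K, (M i k)^2 ≤ 1 := by
      intro i
      have := qpoc_proj_diag_le Q X hQ hX i
      have hsw : ∀ k : Fin K, (Xᵀ * Q) k i = M i k := by
        intro k
        rw [hM]
        rw [show Xᵀ * Q = (Qᵀ * X)ᵀ by rw [Matrix.transpose_mul, Matrix.transpose_transpose]]
        rfl
      calc ∑ k : Fin K, (M i k)^2 = ∑ k : Fin K, ((Xᵀ * Q) k i)^2 := by
            exact Finset.sum_congr rfl fun k _ => by rw [hsw k]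
        _ ≤ 1 := this
    -- apply abel bound
    have main := qpoc_abel_bound K lam' a' p'
      (by simp [hlam']) (by simp [ha'])
      (by
        intro j hj
        by_cases h : j + 1 < K
        · simp only [hlam', dif_pos h, dif_pos hj]
          exact le_of_lt (hlam (by exact Fin.mk_lt_mk.2 (Nat.lt_succ_self j)))
        · simp only [hlam', dif_neg h, dif_pos hj]
          exact le_of_lt (hlampos _))
      (by
        intro j hj
        by_cases h : j + 1 < K
        · simp only [ha', dif_pos h, dif_pos hj]
          exact le_of_lt (ha (by exact Fin.mk_lt_mk.2 (Nat.lt_succ_self j)))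
        · simp only [ha', dif_neg h, dif_pos hj]
          exact le_of_lt (hapos _))
      (by
        intro i k
        simp only [hp']
        split_ifs
        · exact sq_nonneg _
        · exact le_refl 0)
      (by
        intro i
        by_cases h : i < K
        · have e : ∑ k ∈ Finset.range K, p' i k = ∑ k : Fin K, (M ⟨i, h⟩ k)^2 := by
            rw [← Fin.sum_univ_eq_sum_range (fun k => p' i k) K]
            refine Finset.sum_congr rfl fun k _ => ?_
            simp [hp', h, k.isLt]
          rw [e]; exact hrowM ⟨i, h⟩
        · have e : ∑ k ∈ Finset.range K, p' i k = 0 :=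
            Finset.sum_eq_zero fun k _ => by simp [hp', h]
          rw [e]; norm_num)
      (by
        intro k
        by_cases h : k < K
        · have e : ∑ i ∈ Finset.range K, p' i k = ∑ i : Fin K, (M i ⟨k, h⟩)^2 := by
            rw [← Fin.sum_univ_eq_sum_range (fun i => p' i k) K]
            refine Finset.sum_congr rfl fun i _ => ?_
            simp [hp', h, i.isLt]
          rw [e]; exact hcolM ⟨k, h⟩
        · have e : ∑ i ∈ Finset.range K, p' i k = 0 :=
            Finset.sum_eq_zero fun i _ => by simp [hp', h]
          rw [e]; norm_num)
    -- convert sums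
    have lhs_conv : ∑ i : Fin K, ∑ k : Fin K, lam i * a k * (M i k)^2
        = ∑ i ∈ Finset.range K, ∑ k ∈ Finset.range K, lam' i * a' k * p' i k := by
      rw [← Fin.sum_univ_eq_sum_range (fun i => ∑ k ∈ Finset.range K, lam' i * a' k * p' i k) K]
      refine Finset.sum_congr rfl fun i _ => ?_
      rw [← Fin.sum_univ_eq_sum_range (fun k => lam' i * a' k * p' i k) K]
      refine Finset.sum_congr rfl fun k _ => ?_
      simp [hlam', ha', hp', i.isLt, k.isLt]
    have rhs_conv : ∑ k : Fin K, lam k * a k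
        = ∑ k ∈ Finset.range K, lam' k * a' k := by
      rw [← Fin.sum_univ_eq_sum_range (fun k => lam' k * a' k) K]
      refine Finset.sum_congr rfl fun k _ => ?_
      simp [hlam', ha', k.isLt]
    rw [htr, lhs_conv, rhs_conv]
    exact main
  · have h2 : Qᵀ * (Q * Matrix.diagonal lam * Qᵀ) * Q = Matrix.diagonal lam := by
      calc Qᵀ * (Q * Matrix.diagonal lam * Qᵀ) * Q
          = (Qᵀ * Q) * Matrix.diagonal lam * (Qᵀ * Q) := by
            simp only [Matrix.mul_assoc]
        _ = Matrix.diagonal lam := by rw [hQ]; simp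
    rw [h2, Matrix.diagonal_mul_diagonal, Matrix.trace_diagonal]
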